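/- If ρ is a separable state on H_A ⊗ H_B, then the state (T ⊗ id)(ρ), obtained by transposing the first subsystem, is also separable (and in particular positive semidefinite). -/

import Mathlib

open Matrix Kronecker
open scoped ComplexOrder

noncomputable section

/-- A bipartite state is separable if it is a convex combination of product states. -/
def SeparableState {m n : Type*} [Fintype m] [Fintype n] [DecidableEq m] [DecidableEq n]
    (ρ : Matrix (m × n) (m × n) ℂ) : Prop :=
  ∃ (k : ℕ) (p : Fin k → ℝ) (σ : Fin k → Matrix m m ℂ) (τ : Fin k → Matrix n n ℂ),
    (∀ i, 0 ≤ p i) ∧ (∑ i, p i) = 1 ∧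
    (∀ i, (σ i).PosSemidef ∧ (σ i).trace = 1) ∧
    (∀ i, (τ i).PosSemidef ∧ (τ i).trace = 1) ∧
    ρ = ∑ i, (p i : ℂ) • (σ i ⊗ₖ τ i)

/-- Partial transpose of the first subsystem, in the computational basis. -/
def ptA {m n : Type*} (ρ : Matrix (m × n) (m × n) ℂ) : Matrix (m × n) (m × n) ℂ :=
  fun i k => ρ (k.1, i.2) (i.1, k.2)



lemma kron_conjT {m n l k : Type*} (A : Matrix m n ℂ) (B : Matrix l k ℂ) :
    (A ⊗ₖ B)ᴴ = Aᴴ ⊗ₖ Bᴴ := by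
  ext ⟨i,j⟩ ⟨i',j'⟩
  simp [conjTranspose_apply, kroneckerMap_apply, _root_.map_mul]

lemma kron_psd {m n : Type*} [Fintype m] [Fintype n] [DecidableEq m] [DecidableEq n]
    {A : Matrix m m ℂ} {B : Matrix n n ℂ} (hA : A.PosSemidef) (hB : B.PosSemidef) :
    (A ⊗ₖ B).PosSemidef := by
  obtain ⟨C, rfl⟩ : ∃ C : Matrix m m ℂ, A = Cᴴ * C := by
    open scoped MatrixOrder in
    simpa [star_eq_conjTranspose] using CStarAlgebra.nonneg_iff_eq_star_mul_self.mp hA.nonneg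
  obtain ⟨D, rfl⟩ : ∃ D : Matrix n n ℂ, B = Dᴴ * D := by
    open scoped MatrixOrder in
    simpa [star_eq_conjTranspose] using CStarAlgebra.nonneg_iff_eq_star_mul_self.mp hB.nonneg
  rw [mul_kronecker_mul, ← kron_conjT]
  exact posSemidef_conjTranspose_mul_self _

lemma smul_psd {n : Type*} [Fintype n] {M : Matrix n n ℂ} (hM : M.PosSemidef)
    {p : ℝ} (hp : 0 ≤ p) : ((p : ℂ) • M).PosSemidef := by
  constructor
  · unfold Matrix.IsHermitian
    rw [conjTranspose_smul, hM.1.eq]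
    congr 1
    simp
  · intro x
    have h0 : (0:ℂ) ≤ (p:ℂ) := by exact_mod_cast hp
    convert mul_nonneg h0 (hM.2 x) using 1
    simp only [Finsupp.mul_sum, Matrix.smul_apply, smul_eq_mul, mul_assoc, mul_left_comm]

lemma sum_psd {n ι : Type*} [Fintype n] [Fintype ι] {M : ι → Matrix n n ℂ}
    (hM : ∀ i, (M i).PosSemidef) : (∑ i, M i).PosSemidef := by
  classical
  induction (Finset.univ : Finset ι) using Finset.induction with
  | empty => simpa using Matrix.PosSemidef.zero
  | insert _ _ hx ih =>
    rw [Finset.sum_insert hx]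
    exact (hM _).add ih

/-- If `ρ` is separable then so is its partial transpose `(T ⊗ id)(ρ)`; in particular the
partial transpose is positive semidefinite. -/
theorem separable_partial_transpose {m n : Type*}
    [Fintype m] [Fintype n] [DecidableEq m] [DecidableEq n]
    (ρ : Matrix (m × n) (m × n) ℂ) (h : SeparableState ρ) :
    SeparableState (ptA ρ) ∧ (ptA ρ).PosSemidef := by
  obtain ⟨k, p, σ, τ, hp, hp1, hσ, hτ, hρ⟩ := h
  have key : ptA ρ = ∑ i, (p i : ℂ) • ((σ i)ᵀ ⊗ₖ τ i) := by
    subst hρ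
    ext ⟨i1, i2⟩ ⟨k1, k2⟩
    simp only [ptA, Matrix.sum_apply, Matrix.smul_apply, kroneckerMap_apply, transpose_apply]
  have hsep : SeparableState (ptA ρ) := by
    refine ⟨k, p, fun i => (σ i)ᵀ, τ, hp, hp1, fun i => ⟨(hσ i).1.transpose, ?_⟩, hτ, key⟩
    rw [trace_transpose]; exact (hσ i).2
  refine ⟨hsep, ?_⟩
  rw [key]
  exact sum_psd fun i => smul_psd (kron_psd (hσ i).1.transpose (hτ i).1) (hp i)
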